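/- The loop homogeneous symmetric functions h_k^{(r)}(x_1,...,x_m) are invariant under each map s_i. -/

import Mathlib

open Finset

/-- Multiplication of (upper-triangular) N-by-N matrices: for upper triangular
matrices this agrees with true matrix multiplication. -/
def utMul {K : Type*} [Field K] (A B : Matrix ℕ ℕ K) : Matrix ℕ ℕ K :=
  Matrix.of fun i j => ∑ t ∈ Finset.Icc i j, A i t * B t j

/-- The identity infinite matrix. -/
def oneM {K : Type*} [Field K] : Matrix ℕ ℕ K := Matrix.of fun i j => if i = j then 1 else 0

/-- Checkerboard conjugate `A^c` of an infinite matrix. -/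
def chkInf {K : Type*} [Field K] (A : Matrix ℕ ℕ K) : Matrix ℕ ℕ K :=
  Matrix.of fun i j => (-1 : K) ^ (i + j) * A i j

/-- The whirl `M(a_1, …, a_n)`: upper bitriangular with 1's on the diagonal and
`a_i` (index mod `n`) on the superdiagonal. -/
def whirl {K : Type*} [Field K] (n : ℕ) (a : ZMod n → K) : Matrix ℕ ℕ K :=
  Matrix.of fun i j => if j = i then 1 else if j = i + 1 then a (i : ZMod n) else 0

/-- `κ^{(r)}(x,y) = Σ_{j=0}^{n-1} y^{(r+1)}⋯y^{(r+j)} x^{(r+j+1)}⋯x^{(r+n-1)}`. -/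
def kappa {K : Type*} [Field K] (n : ℕ) (xx yy : ZMod n → K) (r : ZMod n) : K :=
  ∑ j ∈ Finset.range n,
    (∏ t ∈ Finset.Icc 1 j, yy (r + (t : ZMod n))) *
      ∏ t ∈ Finset.Icc (j + 1) (n - 1), xx (r + (t : ZMod n))

/-- Loop elementary symmetric function
`e_k^{(r)} = Σ_{i_1 < ⋯ < i_k} x_{i_1}^{(r)} x_{i_2}^{(r+1)} ⋯ x_{i_k}^{(r+k-1)}`. -/
def loopE {K : Type*} [Field K] (m n : ℕ) (x : Fin m → ZMod n → K) (k : ℕ) (r : ZMod n) : K :=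
  ∑ f ∈ Finset.univ.filter (fun f : Fin k → Fin m => ∀ a b : Fin k, a < b → f a < f b),
    ∏ t : Fin k, x (f t) (r + ((t : ℕ) : ZMod n))

/-- Loop homogeneous symmetric function
`h_k^{(r)} = Σ_{i_k ≥ ⋯ ≥ i_1} x_{i_k}^{(r)} x_{i_{k-1}}^{(r+1)} ⋯ x_{i_1}^{(r+k-1)}`,
encoded via the weakly increasing sequence `f = (i_1, …, i_k)`. -/
def loopH {K : Type*} [Field K] (m n : ℕ) (x : Fin m → ZMod n → K) (k : ℕ) (r : ZMod n) : K :=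
  ∑ f ∈ Finset.univ.filter (fun f : Fin k → Fin m => ∀ a b : Fin k, a ≤ b → f a ≤ f b),
    ∏ t : Fin k, x (f t) (r + ((k - 1 - (t : ℕ) : ℕ) : ZMod n))

/-- Loop homogeneous symmetric function with integer index, `0` for negative index. -/
noncomputable def loopHZ {K : Type*} [Field K] (m n : ℕ) (x : Fin m → ZMod n → K)
    (k : ℤ) (r : ZMod n) : K :=
  if k < 0 then 0 else loopH m n x k.toNat r

/-- Single-block loop homogeneous function `h_a^{(b)}(y) = y^{(b+a-1)} y^{(b+a-2)} ⋯ y^{(b)}`. -/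
def singleH {K : Type*} [Field K] (n : ℕ) (y : ZMod n → K) (a : ℕ) (b : ZMod n) : K :=
  ∏ s ∈ Finset.range a, y (b + (s : ZMod n))

/-- `π = y^{(1)} y^{(2)} ⋯ y^{(n)}`, the product over all colors of one block. -/
def pivar {K : Type*} [Field K] (n : ℕ) [NeZero n] (y : ZMod n → K) : K := ∏ j : ZMod n, y j

set_option linter.unusedSectionVars false

section helpers
variable {K : Type*} [Field K] {n : ℕ}

lemma singleH_zero (y : ZMod n → K) (b : ZMod n) : singleH n y 0 b = 1 := by
  simp [singleH]

lemma singleH_one (y : ZMod n → K) (b : ZMod n) : singleH n y 1 b = y b := by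
  simp [singleH]

lemma singleH_succ_top (y : ZMod n → K) (a : ℕ) (b : ZMod n) :
    singleH n y (a + 1) b = singleH n y a b * y (b + (a : ZMod n)) := by
  simp [singleH, Finset.prod_range_succ]

lemma singleH_succ_bot (y : ZMod n → K) (a : ℕ) (b : ZMod n) :
    singleH n y (a + 1) b = y b * singleH n y a (b + 1) := by
  unfold singleH
  rw [Finset.prod_range_succ']
  have h0 : b + ((0 : ℕ) : ZMod n) = b := by push_cast; ring
  rw [h0, mul_comm]
  congr 1
  refine Finset.prod_congr rfl fun s _ => ?_
  congr 1
  push_cast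
  ring

lemma singleH_pi [NeZero n] (y : ZMod n → K) (b : ZMod n) :
    singleH n y n b = ∏ c : ZMod n, y c := by
  unfold singleH
  refine Finset.prod_nbij' (fun s => b + (s : ZMod n)) (fun c => (c - b).val)
    (fun a _ => Finset.mem_univ _) (fun a _ => Finset.mem_range.2 (ZMod.val_lt _))
    (fun a ha => ?_) (fun c _ => ?_) (fun a _ => rfl)
  · rw [add_sub_cancel_left, ZMod.val_natCast_of_lt (Finset.mem_range.1 ha)]
  · rw [show (((c - b).val : ℕ) : ZMod n) = c - b from ZMod.natCast_rightInverse (c - b),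
      add_sub_cancel]

lemma kappa_eq (xx yy : ZMod n → K) (r : ZMod n) :
    kappa n xx yy r =
      ∑ j ∈ Finset.range n,
        singleH n yy j (r + 1) * singleH n xx (n - 1 - j) (r + (j : ZMod n) + 1) := by
  unfold kappa
  refine Finset.sum_congr rfl fun j hj => ?_
  simp only [Finset.mem_range] at hj
  congr 1
  · unfold singleH
    refine Finset.prod_nbij' (fun t => t - 1) (fun s => s + 1)
      (fun a ha => ?_) (fun a ha => ?_) (fun a ha => ?_) (fun a ha => ?_) (fun a ha => ?_)
    · simp only [Finset.mem_Icc] at ha; simp only [Finset.mem_range]; omega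
    · simp only [Finset.mem_range] at ha; simp only [Finset.mem_Icc]; omega
    · simp only [Finset.mem_Icc] at ha; omega
    · omega
    · simp only [Finset.mem_Icc] at ha
      congr 1
      have h2 := congrArg (fun t : ℕ => (t : ZMod n)) (show 1 + (a - 1) = a by omega)
      push_cast at h2
      linear_combination -h2
  · unfold singleH
    refine Finset.prod_nbij' (fun t => t - (j + 1)) (fun s => j + 1 + s)
      (fun a ha => ?_) (fun a ha => ?_) (fun a ha => ?_) (fun a ha => ?_) (fun a ha => ?_)
    · simp only [Finset.mem_Icc] at ha; simp only [Finset.mem_range]; omega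
    · simp only [Finset.mem_range] at ha; simp only [Finset.mem_Icc]; omega
    · simp only [Finset.mem_Icc] at ha; omega
    · omega
    · simp only [Finset.mem_Icc] at ha
      congr 1
      have h2 := congrArg (fun t : ℕ => (t : ZMod n)) (show j + 1 + (a - (j + 1)) = a by omega)
      push_cast at h2
      linear_combination -h2

lemma cast_sub_helper {j : ℕ} (hj : j < n) : ((n - 1 - j : ℕ) : ZMod n) = -(j : ZMod n) - 1 := by
  have h : ((n - 1 - j : ℕ) + (j + 1) : ℕ) = n := by omega
  have h2 := congrArg (fun t : ℕ => (t : ZMod n)) h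
  push_cast at h2
  rw [ZMod.natCast_self] at h2
  linear_combination h2

end helpers

section whirlrel
variable {K : Type*} [Field K] {n : ℕ} [NeZero n]

omit [NeZero n] in
lemma xk_eq (xx yy : ZMod n → K) (c : ZMod n) :
    xx (c - 1) * kappa n xx yy (c - 1) =
      ∑ j ∈ Finset.range n, singleH n yy j c * singleH n xx (n - j) (c + (j : ZMod n)) := by
  rw [kappa_eq, Finset.mul_sum]
  refine Finset.sum_congr rfl fun j hj => ?_
  simp only [Finset.mem_range] at hj
  rw [show c - 1 + 1 = c from by ring, show c - 1 + (j : ZMod n) + 1 = c + (j : ZMod n) from by ring]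
  have hnj : n - j = (n - 1 - j) + 1 := by omega
  rw [hnj, singleH_succ_top]
  rw [show c + (j : ZMod n) + ((n - 1 - j : ℕ) : ZMod n) = c - 1 from by
    rw [cast_sub_helper hj]; ring]
  ring

omit [NeZero n] in
lemma yk_eq (xx yy : ZMod n → K) (c : ZMod n) :
    yy c * kappa n xx yy c =
      ∑ j ∈ Finset.range n,
        singleH n yy (j + 1) c * singleH n xx (n - (j + 1)) (c + ((j : ZMod n) + 1)) := by
  rw [kappa_eq, Finset.mul_sum]
  refine Finset.sum_congr rfl fun j hj => ?_
  rw [singleH_succ_bot]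
  rw [show n - (j + 1) = n - 1 - j from by omega]
  rw [show c + ((j : ZMod n) + 1) = c + (j : ZMod n) + 1 from by ring]
  ring

lemma whirl_rel (xx yy : ZMod n → K) (c : ZMod n) :
    xx (c - 1) * kappa n xx yy (c - 1) + yy (c + 1) * kappa n xx yy (c + 1) =
      kappa n xx yy c * (xx c + yy c) := by
  set T : ZMod n → ℕ → K :=
    fun d j => singleH n yy j d * singleH n xx (n - j) (d + (j : ZMod n)) with hTdef
  have hxk : ∀ d, xx (d - 1) * kappa n xx yy (d - 1) = ∑ j ∈ Finset.range n, T d j :=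
    fun d => xk_eq xx yy d
  have hyk : ∀ d, yy d * kappa n xx yy d = ∑ j ∈ Finset.range n, T d (j + 1) := by
    intro d
    rw [yk_eq]
    refine Finset.sum_congr rfl fun j hj => ?_
    simp only [hTdef]
    push_cast
    ring_nf
  have hend : ∀ d : ZMod n, T d 0 = singleH n xx n d ∧ T d n = singleH n yy n d := by
    intro d
    refine ⟨?_, ?_⟩
    · show singleH n yy 0 d * singleH n xx (n - 0) (d + ((0 : ℕ) : ZMod n)) = _
      rw [singleH_zero, Nat.sub_zero, Nat.cast_zero, add_zero, one_mul]
    · show singleH n yy n d * singleH n xx (n - n) (d + (n : ZMod n)) = _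
      rw [Nat.sub_self, singleH_zero, mul_one]
  have key : ∀ d : ZMod n, ∑ j ∈ Finset.range n, T d j + T d n
      = T d 0 + ∑ j ∈ Finset.range n, T d (j + 1) := by
    intro d
    rw [← Finset.sum_range_succ, Finset.sum_range_succ']
    ring
  have hx2 : xx c * kappa n xx yy c = ∑ j ∈ Finset.range n, T (c + 1) j := by
    have := xk_eq xx yy (c + 1)
    rw [add_sub_cancel_right] at this
    exact this
  have hy2 : yy (c + 1) * kappa n xx yy (c + 1) = ∑ j ∈ Finset.range n, T (c + 1) (j + 1) :=
    hyk (c + 1)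
  have e1 := key c
  have e2 := key (c + 1)
  have p1 : T c 0 = T (c + 1) 0 := by
    rw [(hend c).1, (hend (c + 1)).1, singleH_pi, singleH_pi]
  have p2 : T c n = T (c + 1) n := by
    rw [(hend c).2, (hend (c + 1)).2, singleH_pi, singleH_pi]
  have lhs1 := hxk c
  have lhs2 := hyk c
  linear_combination lhs1 + hy2 - hx2 - lhs2 + e1 - e2 - p2 + p1

lemma telescope_rel (xx yy : ZMod n → K) (k : ℕ) (r : ZMod n) :
    xx (r - 1) * kappa n xx yy (r - 1) + yy (r + (k : ZMod n)) * kappa n xx yy (r + (k : ZMod n))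
      = kappa n xx yy r * yy r
        + xx (r + (k : ZMod n) - 1) * kappa n xx yy (r + (k : ZMod n) - 1) := by
  induction k with
  | zero => push_cast; ring_nf
  | succ k ih =>
      have hw := whirl_rel xx yy (r + (k : ZMod n))
      push_cast
      push_cast at ih
      rw [show r + ((k : ZMod n) + 1) - 1 = r + (k : ZMod n) from by ring,
        show r + ((k : ZMod n) + 1) = r + (k : ZMod n) + 1 from by ring]
      linear_combination ih + hw
end whirlrel

def h2 {K : Type*} [Field K] (n : ℕ) (xx yy : ZMod n → K) (k : ℕ) (r : ZMod n) : K :=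
  ∑ j ∈ Finset.range (k + 1), singleH n xx j (r + ((k - j : ℕ) : ZMod n)) * singleH n yy (k - j) r

section h2sec
variable {K : Type*} [Field K] {n : ℕ} [NeZero n]

omit [NeZero n] in
lemma h2_zero (xx yy : ZMod n → K) (r : ZMod n) : h2 n xx yy 0 r = 1 := by
  simp [h2, singleH_zero]

omit [NeZero n] in
lemma h2_rec_y (xx yy : ZMod n → K) (k : ℕ) (r : ZMod n) :
    h2 n xx yy (k + 1) r = yy r * h2 n xx yy k (r + 1) + singleH n xx (k + 1) r := by
  unfold h2
  rw [Finset.sum_range_succ, Finset.mul_sum]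
  congr 1
  · refine Finset.sum_congr rfl fun j hj => ?_
    simp only [Finset.mem_range] at hj
    rw [show k + 1 - j = (k - j) + 1 from by omega, singleH_succ_bot yy]
    have hc : r + (((k - j) + 1 : ℕ) : ZMod n) = r + 1 + ((k - j : ℕ) : ZMod n) := by
      push_cast; ring
    rw [hc]
    ring
  · rw [Nat.sub_self, Nat.cast_zero, add_zero, singleH_zero, mul_one]

omit [NeZero n] in
lemma h2_rec_x (xx yy : ZMod n → K) (k : ℕ) (r : ZMod n) :
    h2 n xx yy (k + 1) r = xx (r + (k : ZMod n)) * h2 n xx yy k r + singleH n yy (k + 1) r := by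
  unfold h2
  rw [Finset.sum_range_succ', Finset.mul_sum]
  congr 1
  · refine Finset.sum_congr rfl fun j hj => ?_
    simp only [Finset.mem_range] at hj
    rw [show k + 1 - (j + 1) = k - j from by omega, singleH_succ_top xx]
    have hc : r + ((k - j : ℕ) : ZMod n) + (j : ZMod n) = r + (k : ZMod n) := by
      have h2 := congrArg (fun t : ℕ => (t : ZMod n)) (show (k - j) + j = k from by omega)
      push_cast at h2
      linear_combination h2
    rw [hc]
    ring
  · rw [Nat.sub_zero, singleH_zero, one_mul]

/-- The key algebraic identity -/
lemma key_identity (xx yy : ZMod n → K) (k : ℕ) (r : ZMod n) :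
    xx (r - 1) * kappa n xx yy (r - 1) * h2 n xx yy k (r + 1)
      + singleH n yy (k + 1) (r + 1) * kappa n xx yy (r + ((k : ZMod n) + 1))
      = kappa n xx yy r * h2 n xx yy (k + 1) r := by
  induction k generalizing r with
  | zero =>
      have hw := whirl_rel xx yy r
      rw [h2_zero, h2_rec_x, h2_zero, singleH_one, singleH_one]
      push_cast
      simp only [zero_add, add_zero]
      linear_combination hw
  | succ k ih =>
      have ihr := ih r
      have hx1 : h2 n xx yy (k + 1) (r + 1)
          = xx (r + 1 + (k : ZMod n)) * h2 n xx yy k (r + 1) + singleH n yy (k + 1) (r + 1) :=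
        h2_rec_x xx yy k (r + 1)
      have hx2 : h2 n xx yy (k + 2) r
          = xx (r + ((k : ZMod n) + 1)) * h2 n xx yy (k + 1) r + singleH n yy (k + 2) r := by
        have := h2_rec_x xx yy (k + 1) r
        push_cast at this
        exact this
      have hy1 : singleH n yy (k + 2) (r + 1)
          = singleH n yy (k + 1) (r + 1) * yy (r + 1 + (((k + 1) : ℕ) : ZMod n)) :=
        singleH_succ_top yy (k + 1) (r + 1)
      have hy2 : singleH n yy (k + 2) r = yy r * singleH n yy (k + 1) (r + 1) :=
        singleH_succ_bot yy (k + 1) r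
      have ht := telescope_rel xx yy (k + 2) r
      push_cast at hy1 ht ⊢
      rw [show r + ((k : ZMod n) + 1 + 1) = r + ((k : ZMod n) + 2) from by ring,
        show r + 1 + ((k : ZMod n) + 1) = r + ((k : ZMod n) + 2) from by ring] at *
      rw [show r + ((k : ZMod n) + 2) - 1 = r + ((k : ZMod n) + 1) from by ring] at ht
      rw [show r + 1 + (k : ZMod n) = r + ((k : ZMod n) + 1) from by ring] at hx1
      -- now combine
      rw [hx2, hy2, hx1, hy1]
      linear_combination xx (r + ((k : ZMod n) + 1)) * ihr
        + singleH n yy (k + 1) (r + 1) * ht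
end h2sec

section sigmasec
variable {K : Type*} [Field K] {n : ℕ} [NeZero n]
variable (xx yy : ZMod n → K) (σ : K →+* K)
variable (hκ : ∀ r, kappa n xx yy r ≠ 0)
variable (hx : ∀ j, σ (xx j) = yy (j + 1) * kappa n xx yy (j + 1) / kappa n xx yy j)
variable (hy : ∀ j, σ (yy j) = xx (j - 1) * kappa n xx yy (j - 1) / kappa n xx yy j)

include hκ hx in
lemma sigma_singleH_x (a : ℕ) (b : ZMod n) :
    σ (singleH n xx a b) * kappa n xx yy b
      = singleH n yy a (b + 1) * kappa n xx yy (b + (a : ZMod n)) := by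
  induction a with
  | zero => rw [singleH_zero, singleH_zero, map_one, one_mul, one_mul, Nat.cast_zero, add_zero]
  | succ a ih =>
      rw [singleH_succ_top, map_mul, hx (b + (a : ZMod n))]
      rw [singleH_succ_top yy a (b + 1)]
      push_cast
      rw [show b + 1 + (a : ZMod n) = b + (a : ZMod n) + 1 from by ring,
        show b + ((a : ZMod n) + 1) = b + (a : ZMod n) + 1 from by ring]
      have h0 := hκ (b + (a : ZMod n))
      field_simp
      linear_combination (yy (b + (a : ZMod n) + 1) * kappa n xx yy (b + (a : ZMod n) + 1)) * ih

include hκ hy in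
lemma sigma_singleH_y (a : ℕ) (b : ZMod n) :
    σ (singleH n yy a b) * kappa n xx yy (b + (a : ZMod n) - 1)
      = singleH n xx a (b - 1) * kappa n xx yy (b - 1) := by
  induction a with
  | zero => rw [singleH_zero, singleH_zero, map_one, one_mul, one_mul, Nat.cast_zero, add_zero]
  | succ a ih =>
      rw [singleH_succ_top, map_mul, hy (b + (a : ZMod n))]
      rw [singleH_succ_top xx a (b - 1)]
      push_cast
      rw [show b + ((a : ZMod n) + 1) - 1 = b + (a : ZMod n) from by ring,
        show b - 1 + (a : ZMod n) = b + (a : ZMod n) - 1 from by ring]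
      have h0 := hκ (b + (a : ZMod n))
      field_simp
      linear_combination (xx (b + (a : ZMod n) - 1)) * ih

include hκ hx hy in
lemma sigma_h2 (k : ℕ) (r : ZMod n) : σ (h2 n xx yy k r) = h2 n xx yy k r := by
  induction k generalizing r with
  | zero => rw [h2_zero, map_one]
  | succ k ih =>
      rw [h2_rec_y, map_add, map_mul, ih, hy r]
      have hXr := sigma_singleH_x xx yy σ hκ hx (k + 1) r
      push_cast at hXr
      have hk := key_identity xx yy k r
      rw [h2_rec_y xx yy k r] at hk
      have h0 := hκ r
      field_simp
      linear_combination hXr + hk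
end sigmasec

def Jfun {K : Type*} [Field K] (m n : ℕ) (x : Fin m → ZMod n → K) (m' k : ℕ) (r : ZMod n) : K :=
  ∑ f ∈ Finset.univ.filter (fun f : Fin k → Fin m =>
      (∀ a b : Fin k, a ≤ b → f a ≤ f b) ∧ ∀ t, (f t : ℕ) < m'),
    ∏ t : Fin k, x (f t) (r + ((k - 1 - (t : ℕ) : ℕ) : ZMod n))

section Jsec
variable {K : Type*} [Field K] {m n : ℕ} (x : Fin m → ZMod n → K)

lemma loopH_eq_J (k : ℕ) (r : ZMod n) : loopH m n x k r = Jfun m n x m k r := by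
  unfold loopH Jfun
  refine Finset.sum_congr ?_ (fun _ _ => rfl)
  refine Finset.filter_congr fun f _ => ?_
  exact ⟨fun h => ⟨h, fun t => (f t).isLt⟩, fun h => h.1⟩

lemma J_k_zero (m' : ℕ) (r : ZMod n) : Jfun m n x m' 0 r = 1 := by
  unfold Jfun
  rw [Finset.filter_true_of_mem (fun f _ => ⟨fun a _ _ => a.elim0, fun t => t.elim0⟩)]
  simp

lemma J_m_zero (k : ℕ) (r : ZMod n) : Jfun m n x 0 (k + 1) r = 0 := by
  unfold Jfun
  rw [Finset.filter_false_of_mem (fun f _ h => absurd (h.2 0) (by omega)), Finset.sum_empty]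

lemma J_succ (m' k : ℕ) (hm : m' < m) (r : ZMod n) :
    Jfun m n x (m' + 1) (k + 1) r
      = Jfun m n x m' (k + 1) r + x ⟨m', hm⟩ r * Jfun m n x (m' + 1) k (r + 1) := by
  classical
  unfold Jfun
  rw [← Finset.sum_filter_add_sum_filter_not
    (Finset.univ.filter (fun f : Fin (k+1) → Fin m =>
      (∀ a b : Fin (k+1), a ≤ b → f a ≤ f b) ∧ ∀ t, (f t : ℕ) < m' + 1))
    (fun f => ((f (Fin.last k) : ℕ) = m'))]
  have hpart1 : (Finset.univ.filter (fun f : Fin (k+1) → Fin m =>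
      (∀ a b : Fin (k+1), a ≤ b → f a ≤ f b) ∧ ∀ t, (f t : ℕ) < m' + 1)).filter
      (fun f => ¬ ((f (Fin.last k) : ℕ) = m'))
      = Finset.univ.filter (fun f : Fin (k+1) → Fin m =>
      (∀ a b : Fin (k+1), a ≤ b → f a ≤ f b) ∧ ∀ t, (f t : ℕ) < m') := by
    rw [Finset.filter_filter]
    refine Finset.filter_congr fun f _ => ?_
    constructor
    · rintro ⟨⟨hinc, hbd⟩, hne⟩
      refine ⟨hinc, fun t => ?_⟩
      have h1 : f t ≤ f (Fin.last k) := hinc t (Fin.last k) (Fin.le_last t)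
      have h2 := hbd (Fin.last k)
      rw [Fin.le_def] at h1
      omega
    · rintro ⟨hinc, hbd⟩
      exact ⟨⟨hinc, fun t => Nat.lt_succ_of_lt (hbd t)⟩, fun h => absurd h (by have := hbd (Fin.last k); omega)⟩
  have hpart2 : ∑ f ∈ (Finset.univ.filter (fun f : Fin (k+1) → Fin m =>
      (∀ a b : Fin (k+1), a ≤ b → f a ≤ f b) ∧ ∀ t, (f t : ℕ) < m' + 1)).filter
      (fun f => ((f (Fin.last k) : ℕ) = m')),
      ∏ t : Fin (k+1), x (f t) (r + ((k + 1 - 1 - (t : ℕ) : ℕ) : ZMod n))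
      = ∑ g ∈ Finset.univ.filter (fun g : Fin k → Fin m =>
          (∀ a b : Fin k, a ≤ b → g a ≤ g b) ∧ ∀ t, (g t : ℕ) < m' + 1),
        x ⟨m', hm⟩ r * ∏ t : Fin k, x (g t) (r + 1 + ((k - 1 - (t : ℕ) : ℕ) : ZMod n)) := by
    refine Finset.sum_nbij' (fun f => f ∘ Fin.castSucc) (fun g => Fin.snoc g ⟨m', hm⟩)
      ?_ ?_ ?_ ?_ ?_
    · intro f hf
      simp only [Finset.mem_filter, Finset.mem_univ, true_and] at hf ⊢
      obtain ⟨⟨hinc, hbd⟩, _⟩ := hf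
      exact ⟨fun a b hab => hinc a.castSucc b.castSucc (by
          rw [Fin.le_def, Fin.coe_castSucc, Fin.coe_castSucc]; exact hab),
        fun t => hbd t.castSucc⟩
    · intro g hg
      simp only [Finset.mem_filter, Finset.mem_univ, true_and] at hg ⊢
      obtain ⟨hinc, hbd⟩ := hg
      have hle : ∀ t : Fin (k+1), ((Fin.snoc g ⟨m', hm⟩ : Fin (k+1) → Fin m) t : ℕ) ≤ m' := by
        intro t
        refine Fin.lastCases ?_ (fun s => ?_) t
        · rw [Fin.snoc_last]
        · rw [Fin.snoc_castSucc]
          exact Nat.lt_succ_iff.mp (hbd s)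
      refine ⟨⟨fun a b => ?_, fun t => Nat.lt_succ_of_le (hle t)⟩, by rw [Fin.snoc_last]⟩
      refine Fin.lastCases ?_ (fun sb => ?_) b
      · intro _
        rw [Fin.snoc_last, Fin.le_def]
        exact hle a
      · refine Fin.lastCases ?_ (fun sa => ?_) a
        · intro hab3
          exfalso
          rw [Fin.le_def, Fin.coe_castSucc, Fin.val_last] at hab3
          have := sb.isLt
          omega
        · intro hab3
          rw [Fin.snoc_castSucc, Fin.snoc_castSucc]
          refine hinc sa sb ?_
          rw [Fin.le_def, Fin.coe_castSucc, Fin.coe_castSucc] at hab3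
          exact hab3
    · intro f hf
      simp only [Finset.mem_filter] at hf
      have heq : Fin.snoc (f ∘ Fin.castSucc) (⟨m', hm⟩ : Fin m) = f := by
        funext t
        refine Fin.lastCases ?_ (fun s => ?_) t
        · rw [Fin.snoc_last]
          exact Fin.ext hf.2.symm
        · rw [Fin.snoc_castSucc]
          rfl
      exact heq
    · intro g hg
      have heq : (Fin.snoc g (⟨m', hm⟩ : Fin m)) ∘ Fin.castSucc = g :=
        funext fun s => Fin.snoc_castSucc _ _ _
      exact heq
    · intro f hf
      simp only [Finset.mem_filter] at hf
      rw [Fin.prod_univ_castSucc]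
      have hlast : x (f (Fin.last k)) (r + ((k + 1 - 1 - ((Fin.last k : Fin (k+1)) : ℕ) : ℕ) : ZMod n))
          = x ⟨m', hm⟩ r := by
        have h1 : f (Fin.last k) = ⟨m', hm⟩ := Fin.ext hf.2
        rw [h1]
        congr 1
        rw [Fin.val_last, show k + 1 - 1 - k = 0 from by omega, Nat.cast_zero, add_zero]
      rw [hlast, mul_comm]
      congr 1
      refine Finset.prod_congr rfl fun s _ => ?_
      show x (f s.castSucc) (r + ((k + 1 - 1 - (s : ℕ) : ℕ) : ZMod n))
          = x (f s.castSucc) (r + 1 + ((k - 1 - (s : ℕ) : ℕ) : ZMod n))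
      refine congrArg _ ?_
      have hq := congrArg (fun t : ℕ => (t : ZMod n))
        (show (k - 1 - (s : ℕ)) + 1 = k - (s : ℕ) from by have := s.isLt; omega)
      push_cast at hq ⊢
      linear_combination -hq
  rw [hpart1, hpart2, ← Finset.mul_sum]
  ring

lemma J_peel (m' : ℕ) (hm : m' < m) : ∀ (k : ℕ) (r : ZMod n),
    Jfun m n x (m' + 1) k r
      = ∑ b ∈ Finset.range (k + 1),
          Jfun m n x m' (k - b) (r + (b : ZMod n)) * singleH n (x ⟨m', hm⟩) b r := by
  intro k
  induction k with
  | zero =>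
      intro r
      simp [J_k_zero, singleH_zero]
  | succ k ih =>
      intro r
      conv_rhs => rw [Finset.sum_range_succ']
      rw [J_succ x m' k hm r, ih (r + 1), Finset.mul_sum]
      rw [Nat.sub_zero, Nat.cast_zero, add_zero, singleH_zero, mul_one]
      rw [add_comm (Jfun m n x m' (k + 1) r) _]
      congr 1
      refine Finset.sum_congr rfl fun b hb => ?_
      rw [singleH_succ_bot, show k + 1 - (b + 1) = k - b from by omega,
        show r + ((b + 1 : ℕ) : ZMod n) = r + 1 + (b : ZMod n) from by push_cast; ring]
      ring
end Jsec

section mainsec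
variable {K : Type*} [Field K] {m n : ℕ} [NeZero n]

lemma J_two (x : Fin m → ZMod n → K) (i i' : Fin m) (hii' : (i' : ℕ) = (i : ℕ) + 1)
    (k : ℕ) (r : ZMod n) :
    Jfun m n x ((i : ℕ) + 2) k r
      = ∑ d ∈ Finset.range (k + 1),
          Jfun m n x (i : ℕ) (k - d) (r + (d : ZMod n)) * h2 n (x i) (x i') d r := by
  have hi'm : (i : ℕ) + 1 < m := by have := i'.isLt; omega
  have him : (i : ℕ) < m := i.isLt
  have hv1 : (⟨(i : ℕ) + 1, hi'm⟩ : Fin m) = i' := Fin.ext (by simp [hii'])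
  have hv0 : (⟨(i : ℕ), him⟩ : Fin m) = i := Fin.ext rfl
  rw [show (i : ℕ) + 2 = ((i : ℕ) + 1) + 1 from rfl, J_peel x ((i : ℕ) + 1) hi'm k r]
  have hlhs : ∀ b ∈ Finset.range (k + 1),
      Jfun m n x ((i : ℕ) + 1) (k - b) (r + (b : ZMod n))
          * singleH n (x ⟨(i : ℕ) + 1, hi'm⟩) b r
        = ∑ c ∈ Finset.range (k - b + 1),
            Jfun m n x (i : ℕ) (k - b - c) (r + (b : ZMod n) + (c : ZMod n))
              * singleH n (x i) c (r + (b : ZMod n)) * singleH n (x i') b r := by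
    intro b _
    rw [J_peel x (i : ℕ) him (k - b) (r + (b : ZMod n)), hv1, hv0, Finset.sum_mul]
  have hrhs : ∀ d ∈ Finset.range (k + 1),
      Jfun m n x (i : ℕ) (k - d) (r + (d : ZMod n)) * h2 n (x i) (x i') d r
        = ∑ j ∈ Finset.range (d + 1),
            Jfun m n x (i : ℕ) (k - d) (r + (d : ZMod n))
              * (singleH n (x i) j (r + ((d - j : ℕ) : ZMod n)) * singleH n (x i') (d - j) r) := by
    intro d _
    rw [h2, Finset.mul_sum]
  rw [Finset.sum_congr rfl hlhs, Finset.sum_congr rfl hrhs,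
    Finset.sum_sigma', Finset.sum_sigma']
  refine Finset.sum_nbij' (fun p => ⟨p.1 + p.2, p.2⟩) (fun q => ⟨q.1 - q.2, q.2⟩)
    ?_ ?_ ?_ ?_ ?_
  · rintro ⟨b, c⟩ hp
    simp only [Finset.mem_sigma, Finset.mem_range] at hp ⊢
    omega
  · rintro ⟨d, j⟩ hq
    simp only [Finset.mem_sigma, Finset.mem_range] at hq ⊢
    omega
  · rintro ⟨b, c⟩ hp
    simp only [Finset.mem_sigma, Finset.mem_range] at hp
    dsimp only
    rw [show b + c - c = b from by omega]
  · rintro ⟨d, j⟩ hq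
    simp only [Finset.mem_sigma, Finset.mem_range] at hq
    dsimp only
    rw [show d - j + j = d from by omega]
  · rintro ⟨b, c⟩ hp
    simp only [Finset.mem_sigma, Finset.mem_range] at hp
    dsimp only
    rw [show b + c - c = b from by omega, show k - (b + c) = k - b - c from by omega,
      show ((b + c : ℕ) : ZMod n) = (b : ZMod n) + (c : ZMod n) from by push_cast; ring,
      show r + ((b : ZMod n) + (c : ZMod n)) = r + (b : ZMod n) + (c : ZMod n) from by ring]
    ring

variable (x : Fin m → ZMod n → K) (σ : K →+* K) (i i' : Fin m)
  (hii' : (i' : ℕ) = (i : ℕ) + 1)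

include hii' in
lemma sigma_J_low (h3 : ∀ v j, v ≠ i → v ≠ i' → σ (x v j) = x v j) :
    ∀ m' ≤ (i : ℕ), ∀ (k : ℕ) (r : ZMod n), σ (Jfun m n x m' k r) = Jfun m n x m' k r := by
  intro m'
  induction m' with
  | zero =>
      intro _ k r
      cases k with
      | zero => rw [J_k_zero]; exact map_one σ
      | succ k => rw [J_m_zero]; exact map_zero σ
  | succ m'0 ihm =>
      intro hle k r
      have hm0 : m'0 < m := by have := i.isLt; omega
      have hne1 : (⟨m'0, hm0⟩ : Fin m) ≠ i := by
        intro h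
        have := congrArg Fin.val h
        simp only at this
        omega
      have hne2 : (⟨m'0, hm0⟩ : Fin m) ≠ i' := by
        intro h
        have := congrArg Fin.val h
        simp only at this
        omega
      have hfix : ∀ j, σ (x ⟨m'0, hm0⟩ j) = x ⟨m'0, hm0⟩ j := fun j => h3 _ j hne1 hne2
      induction k generalizing r with
      | zero => rw [J_k_zero]; exact map_one σ
      | succ k ihk =>
          rw [J_succ x m'0 k hm0 r, map_add, map_mul, hfix, ihm (by omega) (k + 1) r,
            ihk (r + 1)]

include hii' in
lemma sigma_J_two
    (hκ : ∀ r, kappa n (x i) (x i') r ≠ 0)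
    (hx1 : ∀ j, σ (x i j)
      = x i' (j + 1) * kappa n (x i) (x i') (j + 1) / kappa n (x i) (x i') j)
    (hy1 : ∀ j, σ (x i' j)
      = x i (j - 1) * kappa n (x i) (x i') (j - 1) / kappa n (x i) (x i') j)
    (h3 : ∀ v j, v ≠ i → v ≠ i' → σ (x v j) = x v j)
    (k : ℕ) (r : ZMod n) :
    σ (Jfun m n x ((i : ℕ) + 2) k r) = Jfun m n x ((i : ℕ) + 2) k r := by
  rw [J_two x i i' hii' k r, map_sum]
  refine Finset.sum_congr rfl fun d _ => ?_
  rw [map_mul, sigma_J_low x σ i i' hii' h3 (i : ℕ) le_rfl,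
    sigma_h2 (x i) (x i') σ hκ hx1 hy1]

include hii' in
lemma sigma_J_all
    (hκ : ∀ r, kappa n (x i) (x i') r ≠ 0)
    (hx1 : ∀ j, σ (x i j)
      = x i' (j + 1) * kappa n (x i) (x i') (j + 1) / kappa n (x i) (x i') j)
    (hy1 : ∀ j, σ (x i' j)
      = x i (j - 1) * kappa n (x i) (x i') (j - 1) / kappa n (x i) (x i') j)
    (h3 : ∀ v j, v ≠ i → v ≠ i' → σ (x v j) = x v j) :
    ∀ p : ℕ, (i : ℕ) + 2 + p ≤ m → ∀ (k : ℕ) (r : ZMod n),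
      σ (Jfun m n x ((i : ℕ) + 2 + p) k r) = Jfun m n x ((i : ℕ) + 2 + p) k r := by
  intro p
  induction p with
  | zero => intro _ k r; exact sigma_J_two x σ i i' hii' hκ hx1 hy1 h3 k r
  | succ p ihp =>
      intro hp k r
      have hm0 : (i : ℕ) + 2 + p < m := by omega
      have hne1 : (⟨(i : ℕ) + 2 + p, hm0⟩ : Fin m) ≠ i := by
        intro h
        have := congrArg Fin.val h
        simp only at this
        omega
      have hne2 : (⟨(i : ℕ) + 2 + p, hm0⟩ : Fin m) ≠ i' := by
        intro h
        have := congrArg Fin.val h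
        simp only at this
        omega
      have hfix : ∀ j, σ (x ⟨(i : ℕ) + 2 + p, hm0⟩ j) = x ⟨(i : ℕ) + 2 + p, hm0⟩ j :=
        fun j => h3 _ j hne1 hne2
      induction k generalizing r with
      | zero => rw [J_k_zero]; exact map_one σ
      | succ k ihk =>
          have ihk' : σ (Jfun m n x ((i : ℕ) + 2 + p + 1) k (r + 1))
              = Jfun m n x ((i : ℕ) + 2 + p + 1) k (r + 1) := ihk (r + 1)
          rw [show (i : ℕ) + 2 + (p + 1) = ((i : ℕ) + 2 + p) + 1 from rfl,
            J_succ x ((i : ℕ) + 2 + p) k hm0 r, map_add, map_mul, hfix,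
            ihp (by omega) (k + 1) r, ihk']
end mainsec


/-- Invariance of loop homogeneous symmetric functions under the birational map `s_i`. -/
theorem statement11 {K : Type*} [Field K] (m n : ℕ) [NeZero n] (x : Fin m → ZMod n → K)
    (i i' : Fin m) (hii' : (i' : ℕ) = (i : ℕ) + 1)
    (hκ : ∀ r, kappa n (x i) (x i') r ≠ 0)
    (σ : K →+* K)
    (h1 : ∀ j, σ (x i j) =
      x i' (j + 1) * kappa n (x i) (x i') (j + 1) / kappa n (x i) (x i') j)
    (h2 : ∀ j, σ (x i' j) =
      x i (j - 1) * kappa n (x i) (x i') (j - 1) / kappa n (x i) (x i') j)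
    (h3 : ∀ k j, k ≠ i → k ≠ i' → σ (x k j) = x k j) :
    ∀ (k : ℕ) (r : ZMod n), σ (loopH m n x k r) = loopH m n x k r := by
  intro k r
  rw [loopH_eq_J]
  have him2 : (i : ℕ) + 2 ≤ m := by have := i'.isLt; omega
  have hkey := sigma_J_all x σ i i' hii' hκ h1 h2 h3 (m - ((i : ℕ) + 2)) (by omega) k r
  rw [show (i : ℕ) + 2 + (m - ((i : ℕ) + 2)) = m from by omega] at hkey
  exact hkey
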